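/- For every f ∈ M̃ with ord f = 0 there exist a unique f₀ ∈ M̂ and f₁ ∈ M̃ such that f = f₀ + x12·f₁. -/

import Mathlib

/- Common setup: K = ℂ(x11,x12,x13,x21,x22,x23,s1,s2,s3) realized as the fraction
field of the polynomial ring in nine variables over ℂ.  Variable indices:
0 = x11, 1 = x12, 2 = x13, 3 = x21, 4 = x22, 5 = x23, 6 = s1, 7 = s2, 8 = s3. -/

noncomputable section

open MvPolynomial

abbrev Kf : Type := FractionRing (MvPolynomial (Fin 9) ℂ)

def Xv (i : Fin 9) : Kf := algebraMap (MvPolynomial (Fin 9) ℂ) Kf (MvPolynomial.X i)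

def x11 : Kf := Xv 0
def x12 : Kf := Xv 1
def x13 : Kf := Xv 2
def x21 : Kf := Xv 3
def x22 : Kf := Xv 4
def x23 : Kf := Xv 5
def s1 : Kf := Xv 6
def s2 : Kf := Xv 7
def s3 : Kf := Xv 8

/-- Δ = x11·x23 − x13·x21 -/
def Δl : Kf := x11 * x23 - x13 * x21
/-- p0 = x11·x13·x22² + Δ² -/
def p0 : Kf := x11 * x13 * x22 ^ 2 + Δl ^ 2
/-- p1 = x22·(x13·x21 + x11·x23) -/
def p1 : Kf := x22 * (x13 * x21 + x11 * x23)
/-- p2 = x21·x23 -/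
def p2 : Kf := x21 * x23
/-- p = p0 − x12·p1 + x12²·p2 -/
def pp : Kf := p0 - x12 * p1 + x12 ^ 2 * p2

/-- M: the localization of ℂ[x11,x13,x21,s1,s2,s3] at the multiplicative set
generated by x11·x13·x21, viewed as a subring of K (equivalently, the
ℂ-subalgebra of K generated by the six variables and (x11·x13·x21)⁻¹). -/
def Msub : Subalgebra ℂ Kf :=
  Algebra.adjoin ℂ ({x11, x13, x21, s1, s2, s3, (x11 * x13 * x21)⁻¹} : Set Kf)

/-- M̂: the localization of M[x22,x23] at p0, viewed as a subring of K. -/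
def Mhat : Subalgebra ℂ Kf :=
  Algebra.adjoin ℂ
    ({x11, x13, x21, s1, s2, s3, (x11 * x13 * x21)⁻¹, x22, x23, p0⁻¹} : Set Kf)

/-- M̃: the localization of M̂[x12] at p, viewed as a subring of K. -/
def Mtilde : Subalgebra ℂ Kf :=
  Algebra.adjoin ℂ
    ({x11, x13, x21, s1, s2, s3, (x11 * x13 * x21)⁻¹, x22, x23, p0⁻¹, x12, pp⁻¹} : Set Kf)

/-- ord f : the largest ν ≥ 0 with f ∈ x12^ν·M̃ (and ord 0 = ∞, since 0 lies in
every x12^ν·M̃; for f ∉ M̃ the defining set is empty and the sSup is 0). -/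
def ord (f : Kf) : ℕ∞ :=
  sSup ((↑) '' {ν : ℕ | ∃ g ∈ Mtilde, f = x12 ^ ν * g})

/-- values of the derivation D1 on the nine variables, up to the common factor
(2/3)·x12: D1 = (2/3)·x12·(−x11·∂_{x11} + x13·∂_{x13} + x21·∂_{x21}
+ 2·x22·∂_{x22} + s1·∂_{s1} + 2·s2·∂_{s2}). -/
def D1vals : Fin 9 → Kf := ![-x11, 0, x13, x21, 2 * x22, 0, s1, 2 * s2, 0]

/-- values of the derivation D2 = 2(x13·x21 − x11·x23)·∂_{x22} + 2·x13·x22·∂_{x23}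
on the nine variables. -/
def D2vals : Fin 9 → Kf :=
  ![0, 0, 0, 0, 2 * (x13 * x21 - x11 * x23), 2 * x13 * x22, 0, 0, 0]

/- ===== Auxiliary development for statement_0 ===== -/
set_option maxHeartbeats 1000000
set_option synthInstance.maxHeartbeats 100000

abbrev A9 : Type := MvPolynomial (Fin 9) ℂ

/-- the substitution x12 ↦ 0 on polynomials -/
def emap9 : A9 →+* A9 :=
  (MvPolynomial.aeval (fun i : Fin 9 => if i = 1 then 0 else MvPolynomial.X i)).toRingHom

lemma emap9_X (i : Fin 9) : emap9 (X i) = if i = 1 then 0 else X i := by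
  simp [emap9]

lemma emap9_C (r : ℂ) : emap9 (C r) = C r := by
  simp [emap9]

/-- polynomials whose specialization at x12 = 0 is nonzero -/
def Sden9 : Submonoid A9 := (nonZeroDivisors A9).comap emap9.toMonoidHom

lemma mem_Sden9 {q : A9} : q ∈ Sden9 ↔ emap9 q ≠ 0 := by
  simp [Sden9, Submonoid.mem_comap, mem_nonZeroDivisors_iff_ne_zero]

abbrev Loc9 : Type := Localization Sden9

lemma injKf : Function.Injective (algebraMap A9 Kf) := IsFractionRing.injective A9 Kf

lemma units_ι9 : ∀ s : Sden9, IsUnit (algebraMap A9 Kf s) := by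
  rintro ⟨s, hs⟩
  have hs0 : s ≠ 0 := by
    rintro rfl
    exact (mem_Sden9.mp hs) (map_zero emap9)
  exact isUnit_iff_ne_zero.mpr ((map_ne_zero_iff _ injKf).mpr hs0)

lemma units_Φ9 : ∀ s : Sden9, IsUnit (((algebraMap A9 Kf).comp emap9) s) := by
  rintro ⟨s, hs⟩
  exact isUnit_iff_ne_zero.mpr ((map_ne_zero_iff _ injKf).mpr (mem_Sden9.mp hs))

/-- inclusion of the localization into K -/
def ι9 : Loc9 →+* Kf := IsLocalization.lift units_ι9

/-- evaluation at x12 = 0 -/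
def Φ9 : Loc9 →+* Kf := IsLocalization.lift units_Φ9

lemma ι9_alg (a : A9) : ι9 (algebraMap A9 Loc9 a) = algebraMap A9 Kf a :=
  IsLocalization.lift_eq _ _

lemma Φ9_alg (a : A9) : Φ9 (algebraMap A9 Loc9 a) = algebraMap A9 Kf (emap9 a) :=
  IsLocalization.lift_eq _ _

lemma ι9_inj : Function.Injective ι9 := by
  rw [injective_iff_map_eq_zero]
  intro z hz
  obtain ⟨⟨a, s⟩, rfl⟩ := IsLocalization.mk'_surjective Sden9 z
  have h1 : ι9 (IsLocalization.mk' Loc9 a s) * ι9 (algebraMap A9 Loc9 s) =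
      ι9 (algebraMap A9 Loc9 a) := by
    rw [← map_mul, IsLocalization.mk'_spec]
  rw [hz, zero_mul, ι9_alg] at h1
  have ha : a = 0 := injKf (by simpa using h1.symm)
  rw [ha]
  exact IsLocalization.mk'_zero _

/- explicit polynomials -/
def P0q : A9 := X 0 * X 2 * X 4 ^ 2 + (X 0 * X 5 - X 2 * X 3) ^ 2
def Ppq : A9 := P0q - X 1 * (X 4 * (X 2 * X 3 + X 0 * X 5)) + X 1 ^ 2 * (X 3 * X 5)
def Dq : A9 := X 0 * X 2 * X 3

lemma map_P0q : algebraMap A9 Kf P0q = p0 := by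
  simp [P0q, p0, Δl, x11, x13, x21, x22, x23, Xv, map_add, map_mul, map_sub, map_pow]

lemma map_Ppq : algebraMap A9 Kf Ppq = pp := by
  simp [Ppq, pp, p1, p2, map_P0q, x11, x12, x13, x21, x22, x23, Xv,
    map_add, map_mul, map_sub, map_pow]

lemma map_Dq : algebraMap A9 Kf Dq = x11 * x13 * x21 := by
  simp [Dq, x11, x13, x21, Xv, map_mul]

lemma emap9_P0q : emap9 P0q = P0q := by
  simp [emap9, P0q]

lemma emap9_Ppq : emap9 Ppq = P0q := by
  simp [emap9, Ppq, P0q]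

lemma emap9_Dq : emap9 Dq = Dq := by
  simp [emap9, Dq]

def σ9 : Fin 9 → ℂ := fun i => if i = 5 then 0 else 1

lemma P0q_ne : P0q ≠ 0 := by
  intro h
  have := congrArg (eval σ9) h
  simp [P0q, σ9] at this

lemma Ppq_ne : Ppq ≠ 0 := by
  intro h
  have := congrArg (eval σ9) h
  simp [Ppq, P0q, σ9] at this

lemma Dq_ne : Dq ≠ 0 := by
  intro h
  have := congrArg (eval σ9) h
  simp [Dq, σ9] at this

lemma P0q_mem : P0q ∈ Sden9 := mem_Sden9.mpr (by rw [emap9_P0q]; exact P0q_ne)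
lemma Ppq_mem : Ppq ∈ Sden9 := mem_Sden9.mpr (by rw [emap9_Ppq]; exact P0q_ne)
lemma Dq_mem : Dq ∈ Sden9 := mem_Sden9.mpr (by rw [emap9_Dq]; exact Dq_ne)

lemma p0_ne : p0 ≠ 0 := by rw [← map_P0q]; exact (map_ne_zero_iff _ injKf).mpr P0q_ne
lemma pp_ne : pp ≠ 0 := by rw [← map_Ppq]; exact (map_ne_zero_iff _ injKf).mpr Ppq_ne
lemma x12_ne : x12 ≠ 0 := by
  have : (X 1 : A9) ≠ 0 := MvPolynomial.X_ne_zero 1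
  exact (map_ne_zero_iff _ injKf).mpr this

/-- the representation of the inverse of an element of `Sden9` in the localization -/
lemma inv_pair (q : A9) (hq : q ∈ Sden9) :
    ∃ z : Loc9, ι9 z = (algebraMap A9 Kf q)⁻¹ ∧
      Φ9 z = (algebraMap A9 Kf (emap9 q))⁻¹ := by
  refine ⟨IsLocalization.mk' Loc9 1 ⟨q, hq⟩, ?_, ?_⟩
  · have h := congrArg ι9 (IsLocalization.mk'_spec Loc9 1 ⟨q, hq⟩)
    rw [map_mul, ι9_alg, ι9_alg, map_one] at h
    rw [mul_comm] at h
    exact eq_inv_of_mul_eq_one_right h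
  · have h := congrArg Φ9 (IsLocalization.mk'_spec Loc9 1 ⟨q, hq⟩)
    rw [map_mul, Φ9_alg, Φ9_alg, map_one, map_one] at h
    rw [mul_comm] at h
    exact eq_inv_of_mul_eq_one_right h

lemma Xv_fix (i : Fin 9) (hi : i ≠ 1) : ∃ z : Loc9, ι9 z = Xv i ∧ Φ9 z = Xv i :=
  ⟨algebraMap A9 Loc9 (X i), by rw [ι9_alg]; rfl, by rw [Φ9_alg, emap9_X, if_neg hi]; rfl⟩

lemma Xv_rep' (i : Fin 9) (hi : i ≠ 1) : ∃ z : Loc9, ι9 z = Xv i := by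
  obtain ⟨z, h, -⟩ := Xv_fix i hi
  exact ⟨z, h⟩


/-- every element of M̂ is in the localization and fixed by evaluation at x12 = 0 -/
lemma Mhat_fix : ∀ f ∈ Mhat, ∃ z : Loc9, ι9 z = f ∧ Φ9 z = f := by
  intro f hf
  refine Algebra.adjoin_induction (fun x hx => ?_) (fun r => ?_) ?_ ?_ hf
  · simp only [Set.mem_insert_iff, Set.mem_singleton_iff] at hx
    rcases hx with rfl | rfl | rfl | rfl | rfl | rfl | rfl | rfl | rfl | rfl
    · exact Xv_fix 0 (by decide)
    · exact Xv_fix 2 (by decide)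
    · exact Xv_fix 3 (by decide)
    · exact Xv_fix 6 (by decide)
    · exact Xv_fix 7 (by decide)
    · exact Xv_fix 8 (by decide)
    · rw [← map_Dq]
      obtain ⟨z, h1, h2⟩ := inv_pair Dq Dq_mem
      exact ⟨z, h1, by rw [h2, emap9_Dq]⟩
    · exact Xv_fix 4 (by decide)
    · exact Xv_fix 5 (by decide)
    · rw [← map_P0q]
      obtain ⟨z, h1, h2⟩ := inv_pair P0q P0q_mem
      exact ⟨z, h1, by rw [h2, emap9_P0q]⟩
  · refine ⟨algebraMap A9 Loc9 (C r), ?_, ?_⟩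
    · rw [ι9_alg, ← MvPolynomial.algebraMap_eq, ← IsScalarTower.algebraMap_apply]
    · rw [Φ9_alg, emap9_C, ← MvPolynomial.algebraMap_eq, ← IsScalarTower.algebraMap_apply]
  · rintro x y _ _ ⟨z1, h11, h12⟩ ⟨z2, h21, h22⟩
    exact ⟨z1 + z2, by rw [map_add, h11, h21], by rw [map_add, h12, h22]⟩
  · rintro x y _ _ ⟨z1, h11, h12⟩ ⟨z2, h21, h22⟩
    exact ⟨z1 * z2, by rw [map_mul, h11, h21], by rw [map_mul, h12, h22]⟩

/-- every element of M̃ is in the localization -/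
lemma Mtilde_rep : ∀ f ∈ Mtilde, ∃ z : Loc9, ι9 z = f := by
  intro f hf
  refine Algebra.adjoin_induction (fun x hx => ?_) (fun r => ?_) ?_ ?_ hf
  · simp only [Set.mem_insert_iff, Set.mem_singleton_iff] at hx
    rcases hx with rfl | rfl | rfl | rfl | rfl | rfl | rfl | rfl | rfl | rfl | rfl | rfl
    · exact Xv_rep' 0 (by decide)
    · exact Xv_rep' 2 (by decide)
    · exact Xv_rep' 3 (by decide)
    · exact Xv_rep' 6 (by decide)
    · exact Xv_rep' 7 (by decide)
    · exact Xv_rep' 8 (by decide)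
    · rw [← map_Dq]
      obtain ⟨z, h1, _⟩ := inv_pair Dq Dq_mem
      exact ⟨z, h1⟩
    · exact Xv_rep' 4 (by decide)
    · exact Xv_rep' 5 (by decide)
    · rw [← map_P0q]
      obtain ⟨z, h1, _⟩ := inv_pair P0q P0q_mem
      exact ⟨z, h1⟩
    · exact ⟨algebraMap A9 Loc9 (X 1), ι9_alg _⟩
    · rw [← map_Ppq]
      obtain ⟨z, h1, _⟩ := inv_pair Ppq Ppq_mem
      exact ⟨z, h1⟩
  · refine ⟨algebraMap A9 Loc9 (C r), ?_⟩
    rw [ι9_alg, ← MvPolynomial.algebraMap_eq, ← IsScalarTower.algebraMap_apply]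
  · rintro x y _ _ ⟨z1, h1⟩ ⟨z2, h2⟩
    exact ⟨z1 + z2, by rw [map_add, h1, h2]⟩
  · rintro x y _ _ ⟨z1, h1⟩ ⟨z2, h2⟩
    exact ⟨z1 * z2, by rw [map_mul, h1, h2]⟩

/-- Key uniqueness fact: M̂ ∩ x12·M̃ = 0. -/
lemma key9 (g h : Kf) (hg : g ∈ Mhat) (hh : h ∈ Mtilde) (heq : g = x12 * h) : g = 0 := by
  obtain ⟨zg, hzg1, hzg2⟩ := Mhat_fix g hg
  obtain ⟨zh, hzh⟩ := Mtilde_rep h hh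
  have hx : ι9 (algebraMap A9 Loc9 (X 1)) = x12 := ι9_alg _
  have h1 : ι9 zg = ι9 (algebraMap A9 Loc9 (X 1) * zh) := by
    rw [map_mul, hx, hzh, hzg1, heq]
  have hz := ι9_inj h1
  have h2 : Φ9 zg = Φ9 (algebraMap A9 Loc9 (X 1)) * Φ9 zh := by rw [hz, map_mul]
  rw [hzg2, Φ9_alg, emap9_X] at h2
  simpa using h2

lemma Mhat_le_Mtilde : Mhat ≤ Mtilde := by
  apply Algebra.adjoin_mono
  intro x hx
  simp only [Set.mem_insert_iff, Set.mem_singleton_iff] at hx ⊢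
  tauto

lemma mem_tilde (g : Kf)
    (hg : g ∈ ({x11, x13, x21, s1, s2, s3, (x11 * x13 * x21)⁻¹, x22, x23, p0⁻¹, x12,
      pp⁻¹} : Set Kf)) : g ∈ Mtilde :=
  Algebra.subset_adjoin hg

/-- existence of the decomposition -/
lemma exists9 : ∀ f ∈ Mtilde, ∃ a ∈ Mhat, ∃ b ∈ Mtilde, f = a + x12 * b := by
  intro f hf
  refine Algebra.adjoin_induction (fun x hx => ?_) (fun r => ?_) ?_ ?_ hf
  · simp only [Set.mem_insert_iff, Set.mem_singleton_iff] at hx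
    rcases hx with rfl | rfl | rfl | rfl | rfl | rfl | rfl | rfl | rfl | rfl | rfl | rfl
    case _ => exact ⟨x11, Algebra.subset_adjoin (by simp), 0, zero_mem _, by ring⟩
    case _ => exact ⟨x13, Algebra.subset_adjoin (by simp), 0, zero_mem _, by ring⟩
    case _ => exact ⟨x21, Algebra.subset_adjoin (by simp), 0, zero_mem _, by ring⟩
    case _ => exact ⟨s1, Algebra.subset_adjoin (by simp), 0, zero_mem _, by ring⟩
    case _ => exact ⟨s2, Algebra.subset_adjoin (by simp), 0, zero_mem _, by ring⟩
    case _ => exact ⟨s3, Algebra.subset_adjoin (by simp), 0, zero_mem _, by ring⟩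
    case _ => exact ⟨(x11 * x13 * x21)⁻¹, Algebra.subset_adjoin (by simp), 0, zero_mem _, by ring⟩
    case _ => exact ⟨x22, Algebra.subset_adjoin (by simp), 0, zero_mem _, by ring⟩
    case _ => exact ⟨x23, Algebra.subset_adjoin (by simp), 0, zero_mem _, by ring⟩
    case _ => exact ⟨p0⁻¹, Algebra.subset_adjoin (by simp), 0, zero_mem _, by ring⟩
    case _ => exact ⟨0, zero_mem _, 1, one_mem _, by ring⟩
    case _ =>
      refine ⟨p0⁻¹, Algebra.subset_adjoin (by simp),
        (p1 - x12 * p2) * p0⁻¹ * pp⁻¹, ?_, ?_⟩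
      · have h1 : p1 ∈ Mtilde := by
          have := mem_tilde x22 (by simp)
          have := mem_tilde x13 (by simp)
          have := mem_tilde x21 (by simp)
          have := mem_tilde x11 (by simp)
          have := mem_tilde x23 (by simp)
          unfold p1
          refine mul_mem ?_ (add_mem (mul_mem ?_ ?_) (mul_mem ?_ ?_)) <;> assumption
        have h2 : p2 ∈ Mtilde := by
          have := mem_tilde x21 (by simp)
          have := mem_tilde x23 (by simp)
          unfold p2
          exact mul_mem (by assumption) (by assumption)
        have h3 : x12 ∈ Mtilde := mem_tilde x12 (by simp)
        have h4 : p0⁻¹ ∈ Mtilde := mem_tilde p0⁻¹ (by simp)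
        have h5 : pp⁻¹ ∈ Mtilde := mem_tilde pp⁻¹ (by simp)
        exact mul_mem (mul_mem (sub_mem h1 (mul_mem h3 h2)) h4) h5
      · have hpp : pp = p0 - x12 * p1 + x12 ^ 2 * p2 := rfl
        have h0 := p0_ne
        have h1 := pp_ne
        apply mul_left_cancel₀ (mul_ne_zero h1 h0)
        field_simp
        rw [hpp]
        ring
  · exact ⟨algebraMap ℂ Kf r, algebraMap_mem _ _, 0, zero_mem _, by ring⟩
  · rintro x y _ _ ⟨a1, ha1, b1, hb1, rfl⟩ ⟨a2, ha2, b2, hb2, rfl⟩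
    exact ⟨a1 + a2, add_mem ha1 ha2, b1 + b2, add_mem hb1 hb2, by ring⟩
  · rintro x y _ _ ⟨a1, ha1, b1, hb1, rfl⟩ ⟨a2, ha2, b2, hb2, rfl⟩
    refine ⟨a1 * a2, mul_mem ha1 ha2,
      a1 * b2 + b1 * a2 + x12 * (b1 * b2), ?_, by ring⟩
    exact add_mem (add_mem (mul_mem (Mhat_le_Mtilde ha1) hb2)
      (mul_mem hb1 (Mhat_le_Mtilde ha2)))
      (mul_mem (mem_tilde x12 (by simp)) (mul_mem hb1 hb2))


/-- For every f ∈ M̃ with ord f = 0 there exist a unique f₀ ∈ M̂ and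
f₁ ∈ M̃ such that f = f₀ + x12·f₁. -/
theorem statement_0 (f : Kf) (hf : f ∈ Mtilde) (hord : ord f = 0) :
    ∃! fp : Kf × Kf, fp.1 ∈ Mhat ∧ fp.2 ∈ Mtilde ∧ f = fp.1 + x12 * fp.2 := by
  obtain ⟨a, ha, b, hb, hab⟩ := exists9 f hf
  refine ⟨(a, b), ⟨ha, hb, hab⟩, ?_⟩
  rintro ⟨c, d⟩ ⟨hc, hd, hcd⟩
  have h1 : c - a = x12 * (b - d) := by
    have h := hab.symm.trans hcd
    rw [mul_sub]
    linear_combination -h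
  have h0 : c - a = 0 := key9 _ _ (sub_mem hc ha) (sub_mem hb hd) h1
  have hca : c = a := sub_eq_zero.mp h0
  have hbd : b - d = 0 := by
    rcases mul_eq_zero.mp (h0 ▸ h1).symm with h | h
    · exact absurd h x12_ne
    · exact h
  have hdb : d = b := (sub_eq_zero.mp hbd).symm
  simp [Prod.ext_iff, hca, hdb]
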